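/- Define, for (x,y) in D = {(x,y) : 0 ≤ x ≤ y ≤ 1, x+y ≥ 1}, δ(x,y) = 2y(x+y)/(4y+x-1) and θ(x,y) = 3(x+y)(1-x)/(2y) if x ≤ 1/3; θ(x,y) = 2(x+y)/(y(1+3x)) if x ≥ 1/3 and y ≥ 2/3; θ(x,y) = (x+y)(4(1-x)(1-y)-xy)/(2(x(1-x)+y(1-y)-xy)) if y < 2/3. Then 1/δ(x,y) + 1/θ(x,y) ≥ 2 for all (x,y) ∈ D. -/
import Mathlib


noncomputable def quadPackDensity (x y : ℝ) : ℝ := 2*y*(x+y)/(4*y+x-1)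

noncomputable def quadCoverDensity (x y : ℝ) : ℝ :=
  if x ≤ 1/3 then 3*(x+y)*(1-x)/(2*y)
  else if 2/3 ≤ y then 2*(x+y)/(y*(1+3*x))
  else (x+y)*(4*(1-x)*(1-y)-x*y)/(2*(x*(1-x)+y*(1-y)-x*y))

theorem stmt_19 (x y : ℝ) (hx0 : 0 ≤ x) (hxy : x ≤ y) (hy1 : y ≤ 1) (hsum : 1 ≤ x + y) :
    1 / quadPackDensity x y + 1 / quadCoverDensity x y ≥ 2 := by
  have hy : (0:ℝ) < y := by linarith
  have hs : (0:ℝ) < x + y := by linarith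
  have hP : (0:ℝ) < 4*y + x - 1 := by linarith
  rw [quadPackDensity, quadCoverDensity, one_div_div]
  split_ifs with h1 h2
  · -- x ≤ 1/3
    have hx1 : (0:ℝ) < 1 - x := by linarith
    have hg : 0 ≤ 12*x^2*y + 12*x*y^2 - 3*x^2 - 24*x*y - 8*y^2 + 6*x + 12*y - 3 := by
      nlinarith [mul_nonneg (sub_nonneg.2 hy1) (sub_nonneg.2 h1),
        mul_nonneg (sub_nonneg.2 hy1) (sub_nonneg.2 hsum),
        mul_nonneg (sub_nonneg.2 h1) (sub_nonneg.2 hsum), sq_nonneg (3*x-1),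
        sq_nonneg (1-y), mul_nonneg hx0 (sub_nonneg.2 hy1),
        mul_nonneg (mul_nonneg (sub_nonneg.2 hy1) (sub_nonneg.2 h1)) hx0,
        sq_nonneg (x+y-1)]
    rw [one_div_div, ge_iff_le, div_add_div _ _ (by positivity) (by positivity),
      le_div_iff₀ (by positivity)]
    nlinarith [mul_nonneg hs.le hg]
  · -- 1/3 < x, 2/3 ≤ y
    have hx1 : (0:ℝ) ≤ 1 - x := by linarith
    have hg : 0 ≤ (1-y)*((3*y-1)*(1-x)) :=
      mul_nonneg (by linarith) (mul_nonneg (by linarith) hx1)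
    rw [one_div_div, ge_iff_le, div_add_div _ _ (by positivity) (by positivity),
      le_div_iff₀ (by positivity)]
    nlinarith [mul_nonneg hs.le hg]
  · -- 1/3 < x, y < 2/3
    push_neg at h1 h2
    have hx1 : (0:ℝ) < 1 - x := by linarith
    have hy2 : (0:ℝ) < 1 - y := by linarith
    have hd : (0:ℝ) < 2*(x*(1-x)+y*(1-y)-x*y) := by
      nlinarith [mul_pos (show (0:ℝ) < 2-3*y by linarith) hy, mul_nonneg (sub_nonneg.2 hxy) hy.le,
        mul_pos hy2 hy, mul_nonneg (sub_nonneg.2 hxy) hy2.le, sq_nonneg (x+y-1)]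
    have hn0 : (0:ℝ) < 4*(1-x)*(1-y)-x*y := by
      nlinarith [mul_pos (show (0:ℝ) < 2-3*y by linarith) (show (0:ℝ) < 2-y by linarith),
        mul_nonneg (sub_nonneg.2 hxy) hy2.le, mul_nonneg (sub_nonneg.2 hxy) hy.le]
    have hn : (0:ℝ) < (x+y)*(4*(1-x)*(1-y)-x*y) := mul_pos hs hn0
    have hg : 0 ≤ (4*y+x-1-4*y*(x+y))*(4*(1-x)*(1-y)-x*y) + 4*y*(x*(1-x)+y*(1-y)-x*y) := by
      nlinarith [mul_nonneg (sub_nonneg.2 h2.le) (sub_nonneg.2 hxy),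
        mul_nonneg (sub_nonneg.2 h2.le) (sub_nonneg.2 hsum),
        mul_nonneg (sub_nonneg.2 hxy) (sub_nonneg.2 hsum),
        mul_nonneg (sub_nonneg.2 h2.le) (sub_nonneg.2 h1.le),
        mul_nonneg (sub_nonneg.2 h1.le) (sub_nonneg.2 hsum),
        sq_nonneg (3*y-2), sq_nonneg (3*x-1), sq_nonneg (x+y-1), sq_nonneg (y-x),
        mul_nonneg (mul_nonneg (sub_nonneg.2 h2.le) (sub_nonneg.2 h2.le)) (sub_nonneg.2 hxy)]
    rw [one_div_div, ge_iff_le, div_add_div _ _ (by positivity) hn.ne',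
      le_div_iff₀ (by positivity)]
    nlinarith [mul_nonneg hs.le hg]
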